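/- Let a, c, ε, λ be real numbers with c+λ > 0, and let 0 < x < 1. Then F_3(λ;x) = (A_1·A_2 + B_2)·F_1(λ;x) + A_2·B_1, where A_1 := −(λ(1−εx) + c − 2 + (1−a)x)/(1−x), B_1 := (λ + c − 1)/(1−x), A_2 := −(λ(1−εx) + c − 4 + (2−a)x)/(2(1−x)) and B_2 := (λ + c − 2)/(2(1−x)). Here F_m(λ;x) denotes the convergent series Σ_{n=0}^∞ (a+ελ)_n·(m)_n/((c+λ)_n·n!)·x^n. -/

import Mathlib

open Real Filter Topology


/-- The Pochhammer symbol (rising factorial) (q)_n for real q. -/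
noncomputable def poch (q : ℝ) (n : ℕ) : ℝ := (ascPochhammer ℝ n).eval q

lemma poch_succ (q : ℝ) (n : ℕ) : poch q (n + 1) = poch q n * (q + n) :=
  ascPochhammer_succ_eval n q

lemma poch_zero (q : ℝ) : poch q 0 = 1 := by simp [poch]

lemma poch_pos {q : ℝ} (hq : 0 < q) (n : ℕ) : 0 < poch q n :=
  ascPochhammer_pos n q hq

lemma poch_one (n : ℕ) : poch 1 n = n.factorial := by
  induction n with
  | zero => simp [poch_zero]
  | succ k ih => rw [poch_succ, ih]; push_cast [Nat.factorial_succ]; ring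

lemma poch_two (n : ℕ) : poch 2 n = (n + 1).factorial := by
  induction n with
  | zero => simp [poch_zero]
  | succ k ih => rw [poch_succ, ih]; push_cast [Nat.factorial_succ]; ring

lemma poch_three (n : ℕ) : poch 3 n = (n + 2).factorial / 2 := by
  induction n with
  | zero => simp [poch_zero]
  | succ k ih => rw [poch_succ, ih]; push_cast [Nat.factorial_succ]; ring

/-- F_m(λ;x) := Σ_{n=0}^∞ (a+ελ)_n·(m)_n/((c+λ)_n·n!)·x^n, the Gauss
    hypergeometric function F(a+ελ, m; c+λ; x). -/
noncomputable def Fm (a c ε lam x m : ℝ) : ℝ :=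
  ∑' n : ℕ, poch (a + ε * lam) n * poch m n / (poch (c + lam) n * (Nat.factorial n : ℝ)) * x ^ n

lemma summable_main {α γ x : ℝ} (hγ : 0 < γ) (hx0 : 0 < x) (hx1 : x < 1)
    (w : ℕ → ℝ) (hw : ∀ n, 0 < w n)
    (hr : Tendsto (fun n => w (n + 1) / w n) atTop (𝓝 1)) :
    Summable (fun n => w n * (poch α n / poch γ n) * x ^ n) := by
  set r : ℝ := (1 + x) / 2 with hrdef
  have hr1 : r < 1 := by rw [hrdef]; linarith
  have hxr : x < r := by rw [hrdef]; linarith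
  have hγn : ∀ n : ℕ, (0:ℝ) < γ + n := fun n => by positivity
  have h0 : Tendsto (fun n : ℕ => (α - γ) / (γ + n)) atTop (𝓝 0) := by
    apply Tendsto.div_atTop tendsto_const_nhds
    exact tendsto_atTop_add_const_left _ γ tendsto_natCast_atTop_atTop
  have h1 : Tendsto (fun n : ℕ => (α + n) / (γ + n)) atTop (𝓝 1) := by
    have h := h0.const_add 1
    rw [add_zero] at h
    refine h.congr fun n => ?_
    field_simp [(hγn n).ne']
    ring
  have h2 : Tendsto (fun n : ℕ => |α + n| / (γ + n)) atTop (𝓝 1) := by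
    have h := h1.abs
    rw [abs_one] at h
    refine h.congr fun n => ?_
    rw [abs_div, abs_of_pos (hγn n)]
  have h3 : Tendsto (fun n : ℕ => w (n + 1) / w n * (|α + n| / (γ + n)) * x)
      atTop (𝓝 x) := by
    have h := (hr.mul h2).mul_const x
    simpa using h
  have hev : ∀ᶠ n in atTop, w (n + 1) / w n * (|α + n| / (γ + n)) * x ≤ r :=
    h3.eventually_le_const hxr
  apply summable_of_ratio_norm_eventually_le hr1
  filter_upwards [hev] with n hn
  have hwn := (hw n).ne'
  have hγn' := (hγn n).ne'
  have e1 : ‖w (n + 1) * (poch α (n + 1) / poch γ (n + 1)) * x ^ (n + 1)‖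
      = (w (n + 1) / w n * (|α + n| / (γ + n)) * x) *
        (w n * |poch α n / poch γ n| * x ^ n) := by
    have hpg := poch_pos hγ n
    simp only [poch_succ, mul_div_mul_comm, pow_succ, Real.norm_eq_abs, abs_mul,
      abs_div, abs_pow, abs_of_pos (hw (n + 1)), abs_of_pos (hw n),
      abs_of_pos (hγn n), abs_of_pos hx0, abs_of_pos hpg]
    field_simp
  have e2 : ‖w n * (poch α n / poch γ n) * x ^ n‖
      = w n * |poch α n / poch γ n| * x ^ n := by
    rw [Real.norm_eq_abs, abs_mul, abs_mul, abs_of_pos (hw n), abs_pow,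
      abs_of_pos hx0]
  rw [e1, e2]
  exact mul_le_mul_of_nonneg_right hn
    (mul_nonneg (mul_nonneg (hw n).le (abs_nonneg _)) (pow_nonneg hx0.le n))


/-- The iterated contiguous relation F_3(λ;x) = (A_1·A_2 + B_2)·F_1(λ;x) + A_2·B_1 with
    A_1 = −(λ(1−εx)+c−2+(1−a)x)/(1−x), B_1 = (λ+c−1)/(1−x),
    A_2 = −(λ(1−εx)+c−4+(2−a)x)/(2(1−x)), B_2 = (λ+c−2)/(2(1−x)). -/
theorem stmt_11 (a c ε lam x : ℝ) (hcl : 0 < c + lam) (hx0 : 0 < x) (hx1 : x < 1) :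
    Fm a c ε lam x 3 =
      ((-((lam * (1 - ε * x) + c - 2 + (1 - a) * x) / (1 - x))) *
          (-((lam * (1 - ε * x) + c - 4 + (2 - a) * x) / (2 * (1 - x)))) +
        (lam + c - 2) / (2 * (1 - x))) * Fm a c ε lam x 1 +
      (-((lam * (1 - ε * x) + c - 4 + (2 - a) * x) / (2 * (1 - x)))) *
        ((lam + c - 1) / (1 - x)) := by
  set α : ℝ := a + ε * lam with hα
  set γ : ℝ := c + lam with hγdef
  have hγ : 0 < γ := hcl
  set cn : ℕ → ℝ := fun n => poch α n / poch γ n with hcn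
  have hγn : ∀ n : ℕ, (0:ℝ) < γ + n := fun n => by positivity
  have hpγ : ∀ n, poch γ n ≠ 0 := fun n => (poch_pos hγ n).ne'
  -- key recursion
  have hkey : ∀ n : ℕ, cn (n + 1) * (γ + n) = cn n * (α + n) := by
    intro n
    simp only [hcn, poch_succ]
    field_simp [hpγ n, (hγn n).ne']
  have hcn0 : cn 0 = 1 := by simp [hcn, poch_zero]
  -- the three weight functions
  have hw1 : Tendsto (fun n : ℕ => (1:ℝ) / 1) atTop (𝓝 1) := by
    simpa using tendsto_const_nhds (x := (1:ℝ)) (f := atTop (α := ℕ))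
  -- summability of the three series
  have hS1 : Summable (fun n : ℕ => cn n * x ^ n) := by
    have h := summable_main (α := α) hγ hx0 hx1 (fun _ => 1) (fun _ => one_pos)
      (by simpa using tendsto_const_nhds (x := (1:ℝ)) (f := atTop (α := ℕ)))
    simpa using h
  have htend2 : Tendsto (fun n : ℕ => ((n:ℝ) + 2) / ((n:ℝ) + 1)) atTop (𝓝 1) := by
    have h0 : Tendsto (fun n : ℕ => (1:ℝ) / ((n:ℝ) + 1)) atTop (𝓝 0) := by
      apply Tendsto.div_atTop tendsto_const_nhds
      exact tendsto_atTop_add_const_right _ 1 tendsto_natCast_atTop_atTop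
    have h := h0.const_add 1
    rw [add_zero] at h
    refine h.congr fun n => ?_
    have hne : ((n:ℝ) + 1) ≠ 0 := by positivity
    field_simp
    ring
  have hS2 : Summable (fun n : ℕ => ((n:ℝ) + 1) * (cn n * x ^ n)) := by
    have h := summable_main (α := α) hγ hx0 hx1 (fun n => (n:ℝ) + 1)
      (fun n => by positivity)
      (by push_cast; exact htend2.congr fun n => by ring)
    refine h.congr fun n => ?_
    ring
  have htend3 : Tendsto (fun n : ℕ => ((n:ℝ) + 3) / ((n:ℝ) + 1)) atTop (𝓝 1) := by
    have h0 : Tendsto (fun n : ℕ => (2:ℝ) / ((n:ℝ) + 1)) atTop (𝓝 0) := by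
      apply Tendsto.div_atTop tendsto_const_nhds
      exact tendsto_atTop_add_const_right _ 1 tendsto_natCast_atTop_atTop
    have h := h0.const_add 1
    rw [add_zero] at h
    refine h.congr fun n => ?_
    have : ((n:ℝ) + 1) ≠ 0 := by positivity
    field_simp
    ring
  have hS3 : Summable (fun n : ℕ => ((n:ℝ) + 1) * ((n:ℝ) + 2) / 2 * (cn n * x ^ n)) := by
    have h := summable_main (α := α) hγ hx0 hx1
      (fun n => ((n:ℝ) + 1) * ((n:ℝ) + 2) / 2)
      (fun n => by positivity)
      (by
        have : (fun n : ℕ => (((n:ℝ) + 1 + 1) * ((n:ℝ) + 1 + 2) / 2) /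
            (((n:ℝ) + 1) * ((n:ℝ) + 2) / 2)) = fun n : ℕ => ((n:ℝ) + 3) / ((n:ℝ) + 1) := by
          funext n
          have h1 : ((n:ℝ) + 1) ≠ 0 := by positivity
          have h2 : ((n:ℝ) + 2) ≠ 0 := by positivity
          field_simp
          ring
        push_cast
        rw [this]
        exact htend3)
    refine h.congr fun n => ?_
    ring
  set S1 : ℝ := ∑' n : ℕ, cn n * x ^ n with hS1def
  set S2 : ℝ := ∑' n : ℕ, ((n:ℝ) + 1) * (cn n * x ^ n) with hS2def
  set S3 : ℝ := ∑' n : ℕ, ((n:ℝ) + 1) * ((n:ℝ) + 2) / 2 * (cn n * x ^ n) with hS3def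
  have hhS1 : HasSum (fun n : ℕ => cn n * x ^ n) S1 := hS1.hasSum
  have hhS2 : HasSum (fun n : ℕ => ((n:ℝ) + 1) * (cn n * x ^ n)) S2 := hS2.hasSum
  have hhS3 : HasSum (fun n : ℕ => ((n:ℝ) + 1) * ((n:ℝ) + 2) / 2 * (cn n * x ^ n)) S3 :=
    hS3.hasSum
  -- identify Fm with these sums
  have hrat : ∀ (n : ℕ) (y : ℝ), poch α n * y / (poch γ n * (n.factorial : ℝ)) * x ^ n
      = y / (n.factorial : ℝ) * (cn n * x ^ n) := by
    intro n y
    have hf : (n.factorial : ℝ) ≠ 0 := by positivity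
    rw [hcn]
    field_simp
  have hF1 : Fm a c ε lam x 1 = S1 := by
    rw [Fm, hS1def]
    apply tsum_congr
    intro n
    have hf : (n.factorial : ℝ) ≠ 0 := by positivity
    rw [← hα, ← hγdef, poch_one, hrat, div_self hf, one_mul]
  have hF3 : Fm a c ε lam x 3 = S3 := by
    rw [Fm, hS3def]
    apply tsum_congr
    intro n
    have hf : (n.factorial : ℝ) ≠ 0 := by positivity
    have hfac : ((n + 2).factorial : ℝ) = ((n:ℝ) + 1) * ((n:ℝ) + 2) * n.factorial := by
      rw [Nat.factorial_succ, Nat.factorial_succ]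
      push_cast
      ring
    rw [← hα, ← hγdef, poch_three, hfac, hrat]
    congr 1
    field_simp

  -- relation 1 : (1-x) S2 = ((2-γ) + (α-1)x) S1 + (γ-1)
  have rel1 : (1 - x) * S2 = ((2 - γ) + (α - 1) * x) * S1 + (γ - 1) := by
    set P : ℕ → ℝ := fun n => ((n:ℝ) + 1) * (cn n * x ^ n) + (γ - 2) * (cn n * x ^ n)
      with hP
    have hPsum : HasSum P (S2 + (γ - 2) * S1) := hhS2.add (hhS1.mul_left _)
    have hP0 : P 0 = γ - 1 := by
      simp [hP, hcn0]
      ring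
    have hshift : HasSum (fun n => P (n + 1)) (S2 + (γ - 2) * S1 - P 0) := by
      rw [hasSum_nat_add_iff 1]
      simpa using hPsum
    have hPsucc : ∀ n : ℕ, P (n + 1)
        = x * (((n:ℝ) + 1) * (cn n * x ^ n)) + (α - 1) * x * (cn n * x ^ n) := by
      intro n
      have hk := hkey n
      simp only [hP]
      push_cast
      have : ((n:ℝ) + 1 + 1) * (cn (n + 1) * x ^ (n + 1)) + (γ - 2) * (cn (n + 1) * x ^ (n + 1))
          = (cn (n + 1) * (γ + n)) * x ^ (n + 1) := by ring
      rw [this, hk, pow_succ]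
      ring
    have hcomb : HasSum (fun n : ℕ => x * (((n:ℝ) + 1) * (cn n * x ^ n))
        + (α - 1) * x * (cn n * x ^ n)) (x * S2 + (α - 1) * x * S1) :=
      (hhS2.mul_left x).add (hhS1.mul_left _)
    rw [funext hPsucc] at hshift
    have hu := hshift.unique hcomb
    rw [hP0] at hu
    linarith [hu]
  -- relation 2 : 2(1-x) S3 = ((4-γ)+(α-2)x) S2 + (γ-2) S1
  have rel2 : 2 * (1 - x) * S3 = ((4 - γ) + (α - 2) * x) * S2 + (γ - 2) * S1 := by
    set Q : ℕ → ℝ := fun n => 2 * (((n:ℝ) + 1) * ((n:ℝ) + 2) / 2 * (cn n * x ^ n))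
      + (γ - 4) * (((n:ℝ) + 1) * (cn n * x ^ n)) + (2 - γ) * (cn n * x ^ n) with hQ
    have hQsum : HasSum Q (2 * S3 + (γ - 4) * S2 + (2 - γ) * S1) :=
      ((hhS3.mul_left 2).add (hhS2.mul_left _)).add (hhS1.mul_left _)
    have hQ0 : Q 0 = 0 := by simp [hQ, hcn0]; ring
    have hshift : HasSum (fun n => Q (n + 1)) (2 * S3 + (γ - 4) * S2 + (2 - γ) * S1 - Q 0) := by
      rw [hasSum_nat_add_iff 1]
      simpa using hQsum
    have hQsucc : ∀ n : ℕ, Q (n + 1)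
        = 2 * x * (((n:ℝ) + 1) * ((n:ℝ) + 2) / 2 * (cn n * x ^ n))
          + (α - 2) * x * (((n:ℝ) + 1) * (cn n * x ^ n)) := by
      intro n
      have hk := hkey n
      simp only [hQ]
      push_cast
      have : 2 * (((n:ℝ) + 1 + 1) * ((n:ℝ) + 1 + 2) / 2 * (cn (n + 1) * x ^ (n + 1)))
          + (γ - 4) * (((n:ℝ) + 1 + 1) * (cn (n + 1) * x ^ (n + 1)))
          + (2 - γ) * (cn (n + 1) * x ^ (n + 1))
          = ((n:ℝ) + 1) * (cn (n + 1) * (γ + n)) * x ^ (n + 1) := by ring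
      rw [this, hk, pow_succ]
      ring
    have hcomb : HasSum (fun n : ℕ => 2 * x * (((n:ℝ) + 1) * ((n:ℝ) + 2) / 2 * (cn n * x ^ n))
        + (α - 2) * x * (((n:ℝ) + 1) * (cn n * x ^ n)))
        (2 * x * S3 + (α - 2) * x * S2) :=
      (hhS3.mul_left _).add (hhS2.mul_left _)
    rw [funext hQsucc] at hshift
    have hu := hshift.unique hcomb
    rw [hQ0] at hu
    linarith [hu]
  -- final algebra
  have h1xp : (0:ℝ) < 1 - x := by linarith
  have h1x : (1:ℝ) - x ≠ 0 := h1xp.ne'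
  have h2x : (2:ℝ) * (1 - x) ≠ 0 := by positivity
  have e2 : S2 = (((2 - γ) + (α - 1) * x) * S1 + (γ - 1)) / (1 - x) := by
    rw [eq_div_iff h1x]
    linear_combination rel1
  have e3 : S3 = (((4 - γ) + (α - 2) * x) * S2 + (γ - 2) * S1) / (2 * (1 - x)) := by
    rw [eq_div_iff h2x]
    linear_combination rel2
  rw [hF1, hF3, e3, e2, hα, hγdef]
  field_simp
  ring
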